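/- Let φ be a γ-twisted KMS functional of a C*-dynamical system (A, α). Then φ is γ-invariant: φ(γ(b)) = φ(b) for all b ∈ A. -/

import Mathlib

open Complex

def Strip : Set ℂ := {z | 0 ≤ z.im ∧ z.im ≤ 1}

structure MemAS (F : ℂ → ℂ) : Prop where
  cont : ContinuousOn F Strip
  diff : DifferentiableOn ℂ F {z : ℂ | 0 < z.im ∧ z.im < 1}
  bdd : ∃ C : ℝ, ∀ z ∈ Strip, ‖F z‖ ≤ C

variable {A : Type*} [NormedRing A] [StarRing A] [CStarRing A]
  [NormedAlgebra ℂ A] [CompleteSpace A] [StarModule ℂ A]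

/-- `φ` is a `γ`-twisted KMS functional for the dynamics `α`. -/
def IsTwistedKMS (α : ℝ → A ≃⋆ₐ[ℂ] A) (γ : A ≃⋆ₐ[ℂ] A) (φ : A →L[ℂ] ℂ) : Prop :=
  ∀ a b : A, ∃ F : ℂ → ℂ, MemAS F ∧
    (∀ t : ℝ, F (t : ℂ) = φ (α t a * b)) ∧
    (∀ t : ℝ, F ((t : ℂ) + Complex.I) = φ (γ b * α t a))

-- auxiliary: the key analytic lemma
open Set in
lemma strip_const (F : ℂ → ℂ) (c : ℂ)
    (hc : ContinuousOn F {z : ℂ | 0 ≤ z.im ∧ z.im ≤ 1})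
    (hd : DifferentiableOn ℂ F {z : ℂ | 0 < z.im ∧ z.im < 1})
    (hb : ∃ C : ℝ, ∀ z ∈ {z : ℂ | 0 ≤ z.im ∧ z.im ≤ 1}, ‖F z‖ ≤ C)
    (h0 : ∀ t : ℝ, F (t : ℂ) = c) :
    F Complex.I = c := by
  obtain ⟨C, hC⟩ := hb
  set g : ℂ → ℂ := fun z => F (Complex.I * z) - c with hg
  have hmap : ∀ z : ℂ, (Complex.I * z).im = z.re := by intro z; simp
  have hmapre : ∀ z : ℂ, (Complex.I * z).re = -z.im := by intro z; simp
  have hsub : ∀ z ∈ Complex.HadamardThreeLines.verticalClosedStrip 0 1,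
      Complex.I * z ∈ {z : ℂ | 0 ≤ z.im ∧ z.im ≤ 1} := by
    intro z hz
    simp only [mem_setOf_eq, hmap]
    exact hz
  have hcont : ContinuousOn g (Complex.HadamardThreeLines.verticalClosedStrip 0 1) := by
    apply ContinuousOn.sub _ continuousOn_const
    exact hc.comp ((continuous_const.mul continuous_id).continuousOn) hsub
  have hdiff : DifferentiableOn ℂ g (Complex.HadamardThreeLines.verticalStrip 0 1) := by
    apply DifferentiableOn.sub _ (differentiableOn_const c)
    apply DifferentiableOn.comp hd
    · exact (differentiable_const _ |>.mul differentiable_id).differentiableOn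
    · intro z hz
      simp only [mem_setOf_eq, hmap]
      exact hz
  have hcl : closure (Complex.HadamardThreeLines.verticalStrip 0 1)
      = Complex.HadamardThreeLines.verticalClosedStrip 0 1 := by
    rw [Complex.HadamardThreeLines.verticalClosedStrip, ← closure_Ioo zero_ne_one,
      ← closure_preimage_re]
    rfl
  have hDC : DiffContOnCl ℂ g (Complex.HadamardThreeLines.verticalStrip 0 1) :=
    ⟨hdiff, by rw [hcl]; exact hcont⟩
  have hB : BddAbove ((norm ∘ g) '' (Complex.HadamardThreeLines.verticalClosedStrip 0 1)) := by
    refine ⟨C + ‖c‖, ?_⟩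
    rintro y ⟨z, hz, rfl⟩
    calc ‖g z‖ ≤ ‖F (Complex.I * z)‖ + ‖c‖ := norm_sub_le _ _
      _ ≤ C + ‖c‖ := add_le_add_left (hC _ (hsub z hz)) _
  have hzero : ∀ z ∈ Complex.re ⁻¹' {(0:ℝ)}, ‖g z‖ ≤ 0 := by
    intro z hz
    have hz' : z.re = 0 := hz
    have : Complex.I * z = ((-z.im : ℝ) : ℂ) := by
      apply Complex.ext
      · simp [hmapre z]
      · simp [hmap z, hz']
    show ‖F (Complex.I * z) - c‖ ≤ 0
    rw [this, h0]
    simp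
  have hone : ∀ z ∈ Complex.re ⁻¹' {(1:ℝ)}, ‖g z‖ ≤ C + ‖c‖ := by
    intro z hz
    calc ‖g z‖ ≤ ‖F (Complex.I * z)‖ + ‖c‖ := norm_sub_le _ _
      _ ≤ C + ‖c‖ := by
          refine add_le_add_left (hC _ ?_) _
          have hz' : z.re = 1 := hz
          simp only [mem_setOf_eq, hmap, hz']
          norm_num
  -- g vanishes on the open strip (real points suffice)
  have hvan : ∀ x : ℝ, x ∈ Ioo (0:ℝ) 1 → F (Complex.I * x) = c := by
    intro x hx
    have hmem : (x : ℂ) ∈ Complex.HadamardThreeLines.verticalClosedStrip 0 1 := by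
      simp [Complex.HadamardThreeLines.verticalClosedStrip, le_of_lt hx.1, le_of_lt hx.2]
    have := Complex.HadamardThreeLines.norm_le_interp_of_mem_verticalClosedStrip' (f := g) zero_lt_one hmem hDC hB
      hzero hone
    rw [Complex.ofReal_re] at this
    simp only [sub_zero, div_one] at this
    have h0pow : (0:ℝ) ^ (1 - x) = 0 := Real.zero_rpow (by linarith [hx.2])
    rw [h0pow, zero_mul] at this
    have : g x = 0 := norm_le_zero_iff.mp this
    simpa [hg, sub_eq_zero] using this
  -- now take the limit x → 1⁻
  have hlim : Filter.Tendsto (fun x : ℝ => F (Complex.I * x)) (nhdsWithin 1 (Ioo 0 1))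
      (nhds (F Complex.I)) := by
    have hcI : ContinuousWithinAt F {z : ℂ | 0 ≤ z.im ∧ z.im ≤ 1} Complex.I := by
      apply hc
      simp [Complex.I_im]
    have hpath : Filter.Tendsto (fun x : ℝ => Complex.I * (x:ℂ)) (nhdsWithin 1 (Ioo 0 1))
        (nhdsWithin Complex.I {z : ℂ | 0 ≤ z.im ∧ z.im ≤ 1}) := by
      rw [tendsto_nhdsWithin_iff]
      constructor
      · have : Filter.Tendsto (fun x : ℝ => Complex.I * (x:ℂ)) (nhds 1)
            (nhds (Complex.I * ((1:ℝ):ℂ))) := by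
          exact (continuous_const.mul Complex.continuous_ofReal).tendsto 1
        simpa using this.mono_left nhdsWithin_le_nhds
      · filter_upwards [self_mem_nhdsWithin] with x hx
        simp only [mem_setOf_eq, hmap]
        simp only [Complex.ofReal_re]
        exact ⟨le_of_lt hx.1, le_of_lt hx.2⟩
    exact hcI.tendsto.comp hpath
  have hconst : Filter.Tendsto (fun x : ℝ => F (Complex.I * x)) (nhdsWithin 1 (Ioo 0 1))
      (nhds c) := by
    apply Filter.Tendsto.congr' _ tendsto_const_nhds
    filter_upwards [self_mem_nhdsWithin] with x hx
    exact (hvan x hx).symm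
  have hne : (nhdsWithin (1:ℝ) (Ioo 0 1)).NeBot := right_nhdsWithin_Ioo_neBot one_pos
  exact tendsto_nhds_unique hlim hconst

/-- a twisted KMS functional is invariant under the twist. -/
theorem stmt2 (α : ℝ → A ≃⋆ₐ[ℂ] A) (γ : A ≃⋆ₐ[ℂ] A) (φ : A →L[ℂ] ℂ)
    (hα0 : ∀ a : A, α 0 a = a)
    (hαadd : ∀ s t : ℝ, ∀ a : A, α (s + t) a = α t (α s a))
    (hKMS : IsTwistedKMS α γ φ) :
    ∀ b : A, φ (γ b) = φ b := by
  intro b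
  obtain ⟨F, hAS, h0, h1⟩ := hKMS 1 b
  have hconst : ∀ t : ℝ, F (t : ℂ) = φ b := by
    intro t
    rw [h0 t, map_one, one_mul]
  have hFI : F Complex.I = φ b :=
    strip_const F (φ b) hAS.cont hAS.diff hAS.bdd hconst
  have : F (((0:ℝ):ℂ) + Complex.I) = φ (γ b) := by
    rw [h1 0, map_one, mul_one]
  rw [← this]
  simpa using hFI
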